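/- (Temporal oscillation bound, Nikolskii case) Let α ∈ (0,1) and suppose M := sup_{h ∈ (0,T)} h^{−α} ‖τ_h f‖_{L²} < ∞. Then there exists a constant C, depending only on α (in particular independent of T, N, τ and f), such that (1/τ) · Σ_{n=1}^{N} ∫_ℝ ∫_ℝ a_n(s) a_n(t) ‖f(s) − f(t)‖_H² dt ds ≤ C · τ^{2α} · M². -/

import Mathlib

open MeasureTheory
open scoped ENNReal

/-- The interval `J_n`: `J_0 = [0, τ/2]` and `J_n = [nτ − τ/2, nτ + τ/2]` for `n ≥ 1`,
where `τ = T/(N+1)`. -/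
noncomputable def Jint (T : ℝ) (N : ℕ) (n : ℕ) : Set ℝ :=
  let τ := T / (N + 1)
  if n = 0 then Set.Icc 0 (τ / 2)
  else Set.Icc ((n : ℝ) * τ - τ / 2) ((n : ℝ) * τ + τ / 2)

/-- The weight functions `a_n` from the robust temporal discretization:
`a_1(t) = 1_{J_0}(t) + ((t_1 + τ/2 − t)/τ)·1_{J_1}(t)` and, for `n ≥ 2`,
`a_n(t) = ((t − (t_{n−1} − τ/2))/τ)·1_{J_{n−1}}(t) + ((t_n + τ/2 − t)/τ)·1_{J_n}(t)`,
where `τ = T/(N+1)` and `t_n = nτ`. -/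
noncomputable def aWeight (T : ℝ) (N : ℕ) (n : ℕ) (t : ℝ) : ℝ :=
  let τ := T / (N + 1)
  if n = 1 then
    (Jint T N 0).indicator (fun _ => (1 : ℝ)) t
      + (Jint T N 1).indicator (fun s => (τ + τ / 2 - s) / τ) t
  else
    (Jint T N (n - 1)).indicator (fun s => (s - (((n : ℝ) - 1) * τ - τ / 2)) / τ) t
      + (Jint T N n).indicator (fun s => ((n : ℝ) * τ + τ / 2 - s) / τ) t

/-- The temporal tempOsc
`(1/τ) Σ_{n=1}^N ∫_ℝ ∫_ℝ a_n(s) a_n(t) ‖f(s) − f(t)‖² dt ds`. -/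
noncomputable def tempOsc (T : ℝ) (N : ℕ) {H : Type*} [NormedAddCommGroup H]
    (f : ℝ → H) : ℝ≥0∞ :=
  (ENNReal.ofReal (T / (N + 1)))⁻¹ *
    ∑ n ∈ Finset.Icc 1 N,
      ∫⁻ s, ∫⁻ t,
        ENNReal.ofReal (aWeight T N n s) * ENNReal.ofReal (aWeight T N n t)
          * ENNReal.ofReal (‖f s - f t‖ ^ 2) ∂(volume) ∂(volume)

/-- The squared `L²` norm of the time increment, `‖τ_h f‖_{L²}² = ∫_0^{T−h} ‖f(t+h) − f(t)‖² dt`. -/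
noncomputable def sqIncrementNorm (T : ℝ) {H : Type*} [NormedAddCommGroup H]
    (f : ℝ → H) (h : ℝ) : ℝ≥0∞ :=
  ∫⁻ t in Set.Ioc (0 : ℝ) (T - h), ENNReal.ofReal (‖f (t + h) - f t‖ ^ 2)

namespace TempOscAux

def Sset (T : ℝ) (N : ℕ) (n : ℕ) : Set ℝ :=
  Set.Icc (max 0 (((n : ℝ) - 1) * (T / (N + 1)) - T / (N + 1) / 2))
    ((n : ℝ) * (T / (N + 1)) + T / (N + 1) / 2)

variable {T : ℝ} {N : ℕ}

lemma Jint_pred_subset (hτ : 0 < T / (N + 1)) {n : ℕ} (hn : 1 ≤ n) :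
    Jint T N (n - 1) ⊆ Sset T N n := by
  set τ := T / (N + 1) with hτd
  intro x hx
  rcases eq_or_lt_of_le hn with h1 | h2
  · have hn1 : n = 1 := h1.symm
    subst hn1
    simp only [Jint, if_pos rfl, Set.mem_Icc] at hx
    obtain ⟨hx0, hx1⟩ := hx
    refine ⟨max_le hx0 ?_, ?_⟩ <;> push_cast <;> linarith
  · have h2' : 2 ≤ n := h2
    have hne : ¬ (n - 1 = 0) := by omega
    simp only [Jint, if_neg hne, Set.mem_Icc] at hx
    have hcast : ((n - 1 : ℕ) : ℝ) = (n : ℝ) - 1 := by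
      have := Nat.cast_sub hn (R := ℝ); push_cast at this ⊢; linarith
    rw [hcast] at hx
    obtain ⟨hl, hr⟩ := hx
    have hn2 : (2 : ℝ) ≤ (n : ℝ) := by exact_mod_cast h2'
    have haux : 2 * τ ≤ (n : ℝ) * τ := mul_le_mul_of_nonneg_right hn2 hτ.le
    refine ⟨max_le ?_ ?_, ?_⟩ <;> nlinarith
  
lemma Jint_self_subset (hτ : 0 < T / (N + 1)) {n : ℕ} (hn : 1 ≤ n) :
    Jint T N n ⊆ Sset T N n := by
  set τ := T / (N + 1) with hτd
  intro x hx
  have hne : ¬ (n = 0) := by omega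
  simp only [Jint, if_neg hne, Set.mem_Icc] at hx
  obtain ⟨hl, hr⟩ := hx
  have hn1 : (1 : ℝ) ≤ (n : ℝ) := by exact_mod_cast hn
  have haux : 1 * τ ≤ (n : ℝ) * τ := mul_le_mul_of_nonneg_right hn1 hτ.le
  exact ⟨max_le (by nlinarith) (by nlinarith), by nlinarith⟩

lemma Sset_subset_Icc (hτ : 0 < T / (N + 1)) {n : ℕ} (hnN : n ≤ N) :
    Sset T N n ⊆ Set.Icc 0 T := by
  set τ := T / (N + 1) with hτd
  intro x hx
  obtain ⟨hl, hr⟩ := hx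
  have hTeq : ((N : ℝ) + 1) * τ = T := by
    rw [hτd]; field_simp
  have hNn : (n : ℝ) ≤ (N : ℝ) := by exact_mod_cast hnN
  have haux : (n : ℝ) * τ ≤ (N : ℝ) * τ := mul_le_mul_of_nonneg_right hNn hτ.le
  exact ⟨le_trans (le_max_left _ _) hl, by nlinarith⟩

lemma Sset_diam (hτ : 0 < T / (N + 1)) {n : ℕ} {x y : ℝ}
    (hx : x ∈ Sset T N n) (hy : y ∈ Sset T N n) : |y - x| ≤ 2 * (T / (N + 1)) := by
  set τ := T / (N + 1) with hτd
  have hx1 : ((n : ℝ) - 1) * τ - τ / 2 ≤ x := le_trans (le_max_right _ _) hx.1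
  have hy1 : ((n : ℝ) - 1) * τ - τ / 2 ≤ y := le_trans (le_max_right _ _) hy.1
  have hx2 := hx.2
  have hy2 := hy.2
  rw [abs_le]
  constructor <;> nlinarith

lemma aWeight_le_two (hτ : 0 < T / (N + 1)) {n : ℕ} (hn : 1 ≤ n) (x : ℝ) :
    aWeight T N n x ≤ 2 := by
  rcases eq_or_lt_of_le hn with h1 | h2
  · have hn1 : n = 1 := h1.symm
    subst hn1
    simp only [aWeight, if_pos rfl, if_true]
    set τ := T / (N + 1) with hτd
    have t1 : (Jint T N 0).indicator (fun _ => (1 : ℝ)) x ≤ 1 :=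
      Set.indicator_apply_le' (fun _ => le_rfl) (fun _ => zero_le_one)
    have t2 : (Jint T N 1).indicator (fun s => (τ + τ / 2 - s) / τ) x ≤ 1 := by
      refine Set.indicator_apply_le' (fun hx => ?_) (fun _ => zero_le_one)
      simp only [Jint, if_neg one_ne_zero, Set.mem_Icc] at hx
      rw [div_le_one hτ]; push_cast at hx; linarith [hx.1]
    linarith
  · have h2' : 2 ≤ n := h2
    have hne1 : ¬ (n = 1) := by omega
    have hnem : ¬ (n - 1 = 0) := by omega
    have hnen : ¬ (n = 0) := by omega
    have hcast : ((n - 1 : ℕ) : ℝ) = (n : ℝ) - 1 := by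
      have := Nat.cast_sub hn (R := ℝ); push_cast at this ⊢; linarith
    simp only [aWeight, if_neg hne1]
    set τ := T / (N + 1) with hτd
    have t1 : (Jint T N (n - 1)).indicator
        (fun s => (s - (((n : ℝ) - 1) * τ - τ / 2)) / τ) x ≤ 1 := by
      refine Set.indicator_apply_le' (fun hx => ?_) (fun _ => zero_le_one)
      simp only [Jint, if_neg hnem, Set.mem_Icc, hcast] at hx
      rw [div_le_one hτ]; linarith [hx.2]
    have t2 : (Jint T N n).indicator (fun s => ((n : ℝ) * τ + τ / 2 - s) / τ) x ≤ 1 := by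
      refine Set.indicator_apply_le' (fun hx => ?_) (fun _ => zero_le_one)
      simp only [Jint, if_neg hnen, Set.mem_Icc] at hx
      rw [div_le_one hτ]; linarith [hx.1]
    linarith

lemma aWeight_eq_zero {n : ℕ} (hn : 1 ≤ n) {x : ℝ}
    (hx1 : x ∉ Jint T N (n - 1)) (hx2 : x ∉ Jint T N n) : aWeight T N n x = 0 := by
  rcases eq_or_lt_of_le hn with h1 | h2
  · have hn1 : n = 1 := h1.symm
    subst hn1
    have hx1' : x ∉ Jint T N 0 := hx1
    simp only [aWeight, if_pos rfl, if_true]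
    rw [Set.indicator_of_notMem hx1', Set.indicator_of_notMem hx2, add_zero]
  · have hne1 : ¬ (n = 1) := by omega
    simp only [aWeight, if_neg hne1]
    rw [Set.indicator_of_notMem hx1, Set.indicator_of_notMem hx2, add_zero]

lemma ofReal_aWeight_le (hτ : 0 < T / (N + 1)) {n : ℕ} (hn : 1 ≤ n) (x : ℝ) :
    ENNReal.ofReal (aWeight T N n x)
      ≤ 2 * (Sset T N n).indicator (fun _ => (1 : ℝ≥0∞)) x := by
  by_cases hx : x ∈ Sset T N n
  · rw [Set.indicator_of_mem hx, mul_one]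
    calc ENNReal.ofReal (aWeight T N n x) ≤ ENNReal.ofReal 2 :=
          ENNReal.ofReal_le_ofReal (aWeight_le_two hτ hn x)
      _ = 2 := by norm_num
  · rw [Set.indicator_of_notMem hx, mul_zero]
    have h0 : aWeight T N n x = 0 :=
      aWeight_eq_zero hn (fun h => hx (Jint_pred_subset hτ hn h))
        (fun h => hx (Jint_self_subset hτ hn h))
    simp [h0]
lemma counting (hτ : 0 < T / (N + 1)) (s h : ℝ) :
    (∑ n ∈ Finset.Icc 1 N,
        (Sset T N n).indicator (fun _ => (1 : ℝ≥0∞)) s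
          * (Sset T N n).indicator (fun _ => (1 : ℝ≥0∞)) (s + h))
      ≤ 3 * ((Set.Icc (-(2 * (T / (N + 1)))) (2 * (T / (N + 1)))).indicator
            (fun _ => (1 : ℝ≥0∞)) h
          * ((Set.Icc (0 : ℝ) T).indicator (fun _ => (1 : ℝ≥0∞)) s
            * (Set.Icc (0 : ℝ) T).indicator (fun _ => (1 : ℝ≥0∞)) (s + h))) := by
  classical
  have hterm : ∀ n, (Sset T N n).indicator (fun _ => (1 : ℝ≥0∞)) s
      * (Sset T N n).indicator (fun _ => (1 : ℝ≥0∞)) (s + h)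
      = if s ∈ Sset T N n ∧ s + h ∈ Sset T N n then 1 else 0 := by
    intro n
    by_cases h1 : s ∈ Sset T N n <;> by_cases h2 : s + h ∈ Sset T N n <;>
      simp [h1, h2]
  rw [Finset.sum_congr rfl fun n _ => hterm n, Finset.sum_boole]
  set F := (Finset.Icc 1 N).filter (fun n => s ∈ Sset T N n ∧ s + h ∈ Sset T N n) with hF
  rcases F.eq_empty_or_nonempty with hFe | hFne
  · rw [hFe]; simp
  · obtain ⟨n, hnF⟩ := hFne
    have hnF' := Finset.mem_filter.1 hnF
    obtain ⟨hnI, hs, hsh⟩ := hnF'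
    have hnN := (Finset.mem_Icc.1 hnI).2
    have hsT : s ∈ Set.Icc (0 : ℝ) T := Sset_subset_Icc hτ hnN hs
    have hshT : s + h ∈ Set.Icc (0 : ℝ) T := Sset_subset_Icc hτ hnN hsh
    have hhI : h ∈ Set.Icc (-(2 * (T / (N + 1)))) (2 * (T / (N + 1))) := by
      have hd := Sset_diam hτ hs hsh
      rw [add_sub_cancel_left] at hd
      exact Set.mem_Icc.2 (abs_le.1 hd)
    rw [Set.indicator_of_mem hhI, Set.indicator_of_mem hsT, Set.indicator_of_mem hshT]
    have hne : F.Nonempty := ⟨n, hnF⟩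
    have hs0 : s ∈ Sset T N (F.min' hne) :=
      ((Finset.mem_filter.1 (F.min'_mem hne)).2).1
    have hcard : F.card ≤ 3 := by
      have hsub : F ⊆ Finset.Icc (F.min' hne) (F.min' hne + 2) := by
        intro m hm
        rw [Finset.mem_Icc]
        refine ⟨F.min'_le m hm, ?_⟩
        have hsm : s ∈ Sset T N m := ((Finset.mem_filter.1 hm).2).1
        have h1 : ((m : ℝ) - 1) * (T / (N + 1)) - T / (N + 1) / 2 ≤ s :=
          le_trans (le_max_right _ _) hsm.1
        have h2 : s ≤ (F.min' hne : ℝ) * (T / (N + 1)) + T / (N + 1) / 2 := hs0.2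
        have h3 : (m : ℝ) * (T / (N + 1)) ≤ ((F.min' hne : ℝ) + 2) * (T / (N + 1)) := by
          nlinarith
        have h4 : (m : ℝ) ≤ (F.min' hne : ℝ) + 2 := le_of_mul_le_mul_right h3 hτ
        exact_mod_cast h4
      have hc := Finset.card_le_card hsub
      rw [Nat.card_Icc] at hc
      omega
    calc (F.card : ℝ≥0∞) ≤ ((3 : ℕ) : ℝ≥0∞) := by exact_mod_cast hcard
      _ = 3 * (1 * (1 * 1)) := by norm_num
noncomputable def gfun {H : Type} [NormedAddCommGroup H] (f : ℝ → H) :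
    ℝ → ℝ → ℝ≥0∞ := fun s t => ENNReal.ofReal (‖f s - f t‖ ^ 2)

noncomputable def Phi (T : ℝ) {H : Type} [NormedAddCommGroup H] (f : ℝ → H) :
    ℝ → ℝ≥0∞ := fun h => ∫⁻ s,
      (Set.Icc (0 : ℝ) T).indicator (fun _ => (1 : ℝ≥0∞)) s
        * (Set.Icc (0 : ℝ) T).indicator (fun _ => (1 : ℝ≥0∞)) (s + h)
        * gfun f s (s + h)

section Main

variable {T : ℝ} {N : ℕ} {H : Type} [NormedAddCommGroup H]

lemma gfun_symm (f : ℝ → H) (a b : ℝ) : gfun f a b = gfun f b a := by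
  simp [gfun, norm_sub_rev]

lemma gfun_measurable {f : ℝ → H} (hf : StronglyMeasurable f) :
    Measurable (Function.uncurry (gfun f)) := by
  have h1 : StronglyMeasurable (fun p : ℝ × ℝ => f p.1 - f p.2) :=
    (hf.comp_measurable measurable_fst).sub (hf.comp_measurable measurable_snd)
  exact ENNReal.measurable_ofReal.comp ((h1.norm.measurable).pow_const 2)

lemma indicone_le_one (S : Set ℝ) (x : ℝ) :
    S.indicator (fun _ => (1 : ℝ≥0∞)) x ≤ 1 :=
  Set.indicator_apply_le' (fun _ => le_rfl) (fun _ => zero_le_one)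

lemma indicone_ne_top (S : Set ℝ) (x : ℝ) :
    S.indicator (fun _ => (1 : ℝ≥0∞)) x ≠ ⊤ :=
  ne_top_of_le_ne_top ENNReal.one_ne_top (indicone_le_one S x)

lemma Phi_measurable {f : ℝ → H} (hf : StronglyMeasurable f) :
    Measurable (Phi T f) := by
  apply Measurable.lintegral_prod_right
    (f := fun (h s : ℝ) => (Set.Icc (0 : ℝ) T).indicator (fun _ => (1 : ℝ≥0∞)) s
        * (Set.Icc (0 : ℝ) T).indicator (fun _ => (1 : ℝ≥0∞)) (s + h)
        * gfun f s (s + h))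
  show Measurable fun p : ℝ × ℝ =>
    (Set.Icc (0 : ℝ) T).indicator (fun _ => (1 : ℝ≥0∞)) p.2
      * (Set.Icc (0 : ℝ) T).indicator (fun _ => (1 : ℝ≥0∞)) (p.2 + p.1)
      * gfun f p.2 (p.2 + p.1)
  exact (((measurable_const.indicator measurableSet_Icc).comp measurable_snd).mul
      ((measurable_const.indicator measurableSet_Icc).comp
        (measurable_snd.add measurable_fst))).mul
    ((gfun_measurable hf).comp (measurable_snd.prodMk (measurable_snd.add measurable_fst)))

lemma Phi_even {f : ℝ → H} (h : ℝ) : Phi T f (-h) = Phi T f h := by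
  simp only [Phi]
  have key : ∀ s : ℝ, (Set.Icc (0 : ℝ) T).indicator (fun _ => (1 : ℝ≥0∞)) s
      * (Set.Icc (0 : ℝ) T).indicator (fun _ => (1 : ℝ≥0∞)) (s + -h)
      * gfun f s (s + -h)
      = (fun u => (Set.Icc (0 : ℝ) T).indicator (fun _ => (1 : ℝ≥0∞)) (u + h)
          * (Set.Icc (0 : ℝ) T).indicator (fun _ => (1 : ℝ≥0∞)) u
          * gfun f u (u + h)) (s + -h) := by
    intro s
    have hs : s + -h + h = s := by ring
    simp only [hs]
    rw [gfun_symm]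
  rw [lintegral_congr key,
    lintegral_add_right_eq_self (fun u => (Set.Icc (0 : ℝ) T).indicator (fun _ => (1 : ℝ≥0∞)) (u + h)
      * (Set.Icc (0 : ℝ) T).indicator (fun _ => (1 : ℝ≥0∞)) u * gfun f u (u + h)) (-h)]
  exact lintegral_congr fun u => by ring

lemma Phi_le_sqIncrement {f : ℝ → H} (h : ℝ) :
    Phi T f h ≤ sqIncrementNorm T f h := by
  calc Phi T f h
      ≤ ∫⁻ s, (Set.Icc (0 : ℝ) (T - h)).indicator (fun s => gfun f s (s + h)) s := by
        simp only [Phi]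
        refine lintegral_mono fun s => ?_
        by_cases hs : s ∈ Set.Icc (0 : ℝ) (T - h)
        · rw [Set.indicator_of_mem hs]
          calc _ ≤ 1 * 1 * gfun f s (s + h) :=
                mul_le_mul' (mul_le_mul' (indicone_le_one _ _) (indicone_le_one _ _)) le_rfl
            _ = gfun f s (s + h) := by rw [one_mul, one_mul]
        · rw [Set.indicator_of_notMem hs]
          rw [Set.mem_Icc, not_and_or] at hs
          rcases hs with hs | hs
          · have h0 : (Set.Icc (0 : ℝ) T).indicator (fun _ => (1 : ℝ≥0∞)) s = 0 :=
              Set.indicator_of_notMem (fun hmem => hs hmem.1) _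
            rw [h0, zero_mul, zero_mul]
          · have h0 : (Set.Icc (0 : ℝ) T).indicator (fun _ => (1 : ℝ≥0∞)) (s + h) = 0 :=
              Set.indicator_of_notMem (fun hmem => hs (by linarith [hmem.2])) _
            rw [h0, mul_zero, zero_mul]
    _ = ∫⁻ s in Set.Icc 0 (T - h), gfun f s (s + h) :=
        lintegral_indicator measurableSet_Icc _
    _ = ∫⁻ s in Set.Ioc 0 (T - h), gfun f s (s + h) := by
        rw [restrict_Ioc_eq_restrict_Icc]
    _ = sqIncrementNorm T f h := by
        rw [sqIncrementNorm]
        exact lintegral_congr fun s => by rw [gfun_symm]; rfl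

lemma sum_bound (hτ : 0 < T / (N + 1)) {f : ℝ → H} (hf : StronglyMeasurable f) :
    (∑ n ∈ Finset.Icc 1 N, ∫⁻ s, ∫⁻ t,
        ENNReal.ofReal (aWeight T N n s) * ENNReal.ofReal (aWeight T N n t)
          * ENNReal.ofReal (‖f s - f t‖ ^ 2))
      ≤ 24 * ∫⁻ h in Set.Ioo 0 (2 * (T / (N + 1))), Phi T f h := by
  have hgm := gfun_measurable hf
  have hSm : ∀ n : ℕ, Measurable ((Sset T N n).indicator (fun _ => (1 : ℝ≥0∞))) :=
    fun n => measurable_const.indicator measurableSet_Icc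
  have hFunc : ∀ n : ℕ, Measurable fun p : ℝ × ℝ =>
      (Sset T N n).indicator (fun _ => (1 : ℝ≥0∞)) p.2
        * (Sset T N n).indicator (fun _ => (1 : ℝ≥0∞)) (p.2 + p.1)
        * gfun f p.2 (p.2 + p.1) := fun n =>
    (((hSm n).comp measurable_snd).mul
        ((hSm n).comp (measurable_snd.add measurable_fst))).mul
      (hgm.comp (measurable_snd.prodMk (measurable_snd.add measurable_fst)))
  -- Step 1: single-n bound
  have step1 : ∀ n ∈ Finset.Icc 1 N, (∫⁻ s, ∫⁻ t,
      ENNReal.ofReal (aWeight T N n s) * ENNReal.ofReal (aWeight T N n t)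
        * ENNReal.ofReal (‖f s - f t‖ ^ 2))
      ≤ 4 * ∫⁻ h, ∫⁻ s, (Sset T N n).indicator (fun _ => (1 : ℝ≥0∞)) s
          * (Sset T N n).indicator (fun _ => (1 : ℝ≥0∞)) (s + h) * gfun f s (s + h) := by
    intro n hn
    have hn1 : 1 ≤ n := (Finset.mem_Icc.1 hn).1
    have key : (∫⁻ s, ∫⁻ t,
        ENNReal.ofReal (aWeight T N n s) * ENNReal.ofReal (aWeight T N n t)
          * ENNReal.ofReal (‖f s - f t‖ ^ 2))
        ≤ ∫⁻ s, ∫⁻ t, 4 * ((Sset T N n).indicator (fun _ => (1 : ℝ≥0∞)) s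
            * (Sset T N n).indicator (fun _ => (1 : ℝ≥0∞)) t * gfun f s t) := by
      refine lintegral_mono fun s => lintegral_mono fun t => ?_
      have h1 := ofReal_aWeight_le hτ hn1 s
      have h2 := ofReal_aWeight_le hτ hn1 t
      calc ENNReal.ofReal (aWeight T N n s) * ENNReal.ofReal (aWeight T N n t)
            * ENNReal.ofReal (‖f s - f t‖ ^ 2)
          ≤ (2 * (Sset T N n).indicator (fun _ => (1 : ℝ≥0∞)) s)
              * (2 * (Sset T N n).indicator (fun _ => (1 : ℝ≥0∞)) t) * gfun f s t :=
            mul_le_mul' (mul_le_mul' h1 h2) le_rfl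
        _ = 4 * ((Sset T N n).indicator (fun _ => (1 : ℝ≥0∞)) s
            * (Sset T N n).indicator (fun _ => (1 : ℝ≥0∞)) t * gfun f s t) := by ring
    refine le_trans key (le_of_eq ?_)
    calc (∫⁻ s, ∫⁻ t, 4 * ((Sset T N n).indicator (fun _ => (1 : ℝ≥0∞)) s
            * (Sset T N n).indicator (fun _ => (1 : ℝ≥0∞)) t * gfun f s t))
        = 4 * ∫⁻ s, ∫⁻ t, (Sset T N n).indicator (fun _ => (1 : ℝ≥0∞)) s
            * (Sset T N n).indicator (fun _ => (1 : ℝ≥0∞)) t * gfun f s t := by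
          rw [← lintegral_const_mul' 4 _ (by norm_num)]
          exact lintegral_congr fun s => lintegral_const_mul' 4 _ (by norm_num)
      _ = 4 * ∫⁻ s, ∫⁻ h, (Sset T N n).indicator (fun _ => (1 : ℝ≥0∞)) s
            * (Sset T N n).indicator (fun _ => (1 : ℝ≥0∞)) (s + h) * gfun f s (s + h) := by
          congr 1
          exact lintegral_congr fun s =>
            (lintegral_add_left_eq_self
              (fun t => (Sset T N n).indicator (fun _ => (1 : ℝ≥0∞)) s
                * (Sset T N n).indicator (fun _ => (1 : ℝ≥0∞)) t * gfun f s t) s).symm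
      _ = 4 * ∫⁻ h, ∫⁻ s, (Sset T N n).indicator (fun _ => (1 : ℝ≥0∞)) s
            * (Sset T N n).indicator (fun _ => (1 : ℝ≥0∞)) (s + h) * gfun f s (s + h) := by
          congr 1
          refine lintegral_lintegral_swap (Measurable.aemeasurable ?_)
          show Measurable fun p : ℝ × ℝ =>
            (Sset T N n).indicator (fun _ => (1 : ℝ≥0∞)) p.1
              * (Sset T N n).indicator (fun _ => (1 : ℝ≥0∞)) (p.1 + p.2)
              * gfun f p.1 (p.1 + p.2)
          exact (((hSm n).comp measurable_fst).mul
              ((hSm n).comp (measurable_fst.add measurable_snd))).mul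
            (hgm.comp (measurable_fst.prodMk (measurable_fst.add measurable_snd)))
  -- Step 2-3: sum inside
  have step3 : (∑ n ∈ Finset.Icc 1 N, ∫⁻ h, ∫⁻ s,
      (Sset T N n).indicator (fun _ => (1 : ℝ≥0∞)) s
        * (Sset T N n).indicator (fun _ => (1 : ℝ≥0∞)) (s + h) * gfun f s (s + h))
      = ∫⁻ h, ∫⁻ s, ∑ n ∈ Finset.Icc 1 N,
          (Sset T N n).indicator (fun _ => (1 : ℝ≥0∞)) s
            * (Sset T N n).indicator (fun _ => (1 : ℝ≥0∞)) (s + h) * gfun f s (s + h) := by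
    have hlpr : ∀ n : ℕ, Measurable fun h : ℝ => ∫⁻ s,
        (Sset T N n).indicator (fun _ => (1 : ℝ≥0∞)) s
          * (Sset T N n).indicator (fun _ => (1 : ℝ≥0∞)) (s + h) * gfun f s (s + h) := by
      intro n
      apply Measurable.lintegral_prod_right
        (f := fun (h s : ℝ) => (Sset T N n).indicator (fun _ => (1 : ℝ≥0∞)) s
          * (Sset T N n).indicator (fun _ => (1 : ℝ≥0∞)) (s + h) * gfun f s (s + h))
      show Measurable fun p : ℝ × ℝ =>
        (Sset T N n).indicator (fun _ => (1 : ℝ≥0∞)) p.2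
          * (Sset T N n).indicator (fun _ => (1 : ℝ≥0∞)) (p.2 + p.1)
          * gfun f p.2 (p.2 + p.1)
      exact hFunc n
    rw [← lintegral_finset_sum _ (fun n _ => hlpr n)]
    refine lintegral_congr fun h => ?_
    rw [← lintegral_finset_sum]
    intro n _
    exact ((hSm n).mul ((hSm n).comp (measurable_id.add_const h))).mul
      (hgm.comp (measurable_id.prodMk (measurable_id.add_const h)))
  -- Step 4: counting bound pointwise
  have step4 : (∫⁻ h, ∫⁻ s, ∑ n ∈ Finset.Icc 1 N,
      (Sset T N n).indicator (fun _ => (1 : ℝ≥0∞)) s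
        * (Sset T N n).indicator (fun _ => (1 : ℝ≥0∞)) (s + h) * gfun f s (s + h))
      ≤ ∫⁻ h, (3 * (Set.Icc (-(2 * (T / (N + 1)))) (2 * (T / (N + 1)))).indicator
          (fun _ => (1 : ℝ≥0∞)) h) * Phi T f h := by
    refine lintegral_mono fun h => ?_
    calc (∫⁻ s, ∑ n ∈ Finset.Icc 1 N,
        (Sset T N n).indicator (fun _ => (1 : ℝ≥0∞)) s
          * (Sset T N n).indicator (fun _ => (1 : ℝ≥0∞)) (s + h) * gfun f s (s + h))
        ≤ ∫⁻ s, (3 * (Set.Icc (-(2 * (T / (N + 1)))) (2 * (T / (N + 1)))).indicator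
            (fun _ => (1 : ℝ≥0∞)) h)
            * ((Set.Icc (0 : ℝ) T).indicator (fun _ => (1 : ℝ≥0∞)) s
              * (Set.Icc (0 : ℝ) T).indicator (fun _ => (1 : ℝ≥0∞)) (s + h)
              * gfun f s (s + h)) := by
          refine lintegral_mono fun s => ?_
          have hc := counting hτ s h
          calc (∑ n ∈ Finset.Icc 1 N,
              (Sset T N n).indicator (fun _ => (1 : ℝ≥0∞)) s
                * (Sset T N n).indicator (fun _ => (1 : ℝ≥0∞)) (s + h) * gfun f s (s + h))
              = (∑ n ∈ Finset.Icc 1 N,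
                  (Sset T N n).indicator (fun _ => (1 : ℝ≥0∞)) s
                    * (Sset T N n).indicator (fun _ => (1 : ℝ≥0∞)) (s + h)) * gfun f s (s + h) := by
                rw [Finset.sum_mul]
            _ ≤ (3 * ((Set.Icc (-(2 * (T / (N + 1)))) (2 * (T / (N + 1)))).indicator
                  (fun _ => (1 : ℝ≥0∞)) h
                * ((Set.Icc (0 : ℝ) T).indicator (fun _ => (1 : ℝ≥0∞)) s
                  * (Set.Icc (0 : ℝ) T).indicator (fun _ => (1 : ℝ≥0∞)) (s + h))))
                * gfun f s (s + h) := mul_le_mul_left hc _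
            _ = _ := by ring
      _ = (3 * (Set.Icc (-(2 * (T / (N + 1)))) (2 * (T / (N + 1)))).indicator
            (fun _ => (1 : ℝ≥0∞)) h) * Phi T f h := by
          simp only [Phi]
          exact lintegral_const_mul' _ _
            (ENNReal.mul_ne_top (by norm_num) (indicone_ne_top _ _))
  -- Step 5-9: reduce to one-sided increment integral
  have hχpm : Measurable ((Set.Icc (0 : ℝ) (2 * (T / (N + 1)))).indicator
      (fun _ => (1 : ℝ≥0∞))) := measurable_const.indicator measurableSet_Icc
  have hΦm : Measurable (Phi T f) := Phi_measurable hf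
  have hnegF : Measurable (fun x : ℝ =>
      (Set.Icc (0 : ℝ) (2 * (T / (N + 1)))).indicator (fun _ => (1 : ℝ≥0∞)) (-x)
        * Phi T f x) := (hχpm.comp measurable_neg).mul hΦm
  have h8 : (∫⁻ x, (Set.Icc (0 : ℝ) (2 * (T / (N + 1)))).indicator
        (fun _ => (1 : ℝ≥0∞)) (-x) * Phi T f x)
      = ∫⁻ x, (Set.Icc (0 : ℝ) (2 * (T / (N + 1)))).indicator
        (fun _ => (1 : ℝ≥0∞)) x * Phi T f x := by
    have hmp := (Measure.measurePreserving_neg (volume : Measure ℝ)).lintegral_comp hnegF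
    rw [← hmp]
    exact lintegral_congr fun a => by rw [neg_neg, Phi_even]
  have hsplit : ∀ x : ℝ, (Set.Icc (-(2 * (T / (N + 1)))) (2 * (T / (N + 1)))).indicator
        (fun _ => (1 : ℝ≥0∞)) x
      ≤ (Set.Icc (0 : ℝ) (2 * (T / (N + 1)))).indicator (fun _ => (1 : ℝ≥0∞)) (-x)
        + (Set.Icc (0 : ℝ) (2 * (T / (N + 1)))).indicator (fun _ => (1 : ℝ≥0∞)) x := by
    intro x
    by_cases hx : x ∈ Set.Icc (-(2 * (T / (N + 1)))) (2 * (T / (N + 1)))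
    · rcases le_or_gt 0 x with h0 | h0
      · have hmem : x ∈ Set.Icc (0 : ℝ) (2 * (T / (N + 1))) := ⟨h0, hx.2⟩
        rw [Set.indicator_of_mem hx, Set.indicator_of_mem hmem]
        exact le_add_self
      · have hmem : -x ∈ Set.Icc (0 : ℝ) (2 * (T / (N + 1))) :=
          ⟨by linarith, by linarith [hx.1]⟩
        rw [Set.indicator_of_mem hx, Set.indicator_of_mem hmem]
        exact le_add_of_le_of_nonneg le_rfl zero_le
    · rw [Set.indicator_of_notMem hx]
      exact zero_le
  have step9 : (∫⁻ x, (Set.Icc (0 : ℝ) (2 * (T / (N + 1)))).indicator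
        (fun _ => (1 : ℝ≥0∞)) x * Phi T f x)
      = ∫⁻ h in Set.Ioo 0 (2 * (T / (N + 1))), Phi T f h := by
    have hind : ∀ x : ℝ, (Set.Icc (0 : ℝ) (2 * (T / (N + 1)))).indicator
        (fun _ => (1 : ℝ≥0∞)) x * Phi T f x
        = (Set.Icc (0 : ℝ) (2 * (T / (N + 1)))).indicator (Phi T f) x := by
      intro x
      by_cases hx : x ∈ Set.Icc (0 : ℝ) (2 * (T / (N + 1)))
      · rw [Set.indicator_of_mem hx, Set.indicator_of_mem hx, one_mul]
      · rw [Set.indicator_of_notMem hx, Set.indicator_of_notMem hx, zero_mul]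
    rw [lintegral_congr hind, lintegral_indicator measurableSet_Icc,
      ← restrict_Ioo_eq_restrict_Icc]
  -- assemble
  calc (∑ n ∈ Finset.Icc 1 N, ∫⁻ s, ∫⁻ t,
      ENNReal.ofReal (aWeight T N n s) * ENNReal.ofReal (aWeight T N n t)
        * ENNReal.ofReal (‖f s - f t‖ ^ 2))
      ≤ ∑ n ∈ Finset.Icc 1 N, 4 * ∫⁻ h, ∫⁻ s,
          (Sset T N n).indicator (fun _ => (1 : ℝ≥0∞)) s
            * (Sset T N n).indicator (fun _ => (1 : ℝ≥0∞)) (s + h) * gfun f s (s + h) :=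
        Finset.sum_le_sum step1
    _ = 4 * ∑ n ∈ Finset.Icc 1 N, ∫⁻ h, ∫⁻ s,
          (Sset T N n).indicator (fun _ => (1 : ℝ≥0∞)) s
            * (Sset T N n).indicator (fun _ => (1 : ℝ≥0∞)) (s + h) * gfun f s (s + h) := by
        rw [Finset.mul_sum]
    _ = 4 * ∫⁻ h, ∫⁻ s, ∑ n ∈ Finset.Icc 1 N,
          (Sset T N n).indicator (fun _ => (1 : ℝ≥0∞)) s
            * (Sset T N n).indicator (fun _ => (1 : ℝ≥0∞)) (s + h) * gfun f s (s + h) := by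
        rw [step3]
    _ ≤ 4 * ∫⁻ h, (3 * (Set.Icc (-(2 * (T / (N + 1)))) (2 * (T / (N + 1)))).indicator
          (fun _ => (1 : ℝ≥0∞)) h) * Phi T f h := mul_le_mul_right step4 _
    _ = 12 * ∫⁻ h, (Set.Icc (-(2 * (T / (N + 1)))) (2 * (T / (N + 1)))).indicator
          (fun _ => (1 : ℝ≥0∞)) h * Phi T f h := by
        have hpull : (∫⁻ h, 3 * (Set.Icc (-(2 * (T / (N + 1)))) (2 * (T / (N + 1)))).indicator
              (fun _ => (1 : ℝ≥0∞)) h * Phi T f h)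
            = 3 * ∫⁻ h, (Set.Icc (-(2 * (T / (N + 1)))) (2 * (T / (N + 1)))).indicator
              (fun _ => (1 : ℝ≥0∞)) h * Phi T f h := by
          rw [← lintegral_const_mul' 3 _ (by norm_num)]
          exact lintegral_congr fun h => by ring
        rw [hpull, ← mul_assoc]
        norm_num
    _ ≤ 12 * ∫⁻ h, ((Set.Icc (0 : ℝ) (2 * (T / (N + 1)))).indicator (fun _ => (1 : ℝ≥0∞)) (-h)
          + (Set.Icc (0 : ℝ) (2 * (T / (N + 1)))).indicator (fun _ => (1 : ℝ≥0∞)) h)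
          * Phi T f h := by
        refine mul_le_mul_right (lintegral_mono fun h => mul_le_mul_left (hsplit h) _) _
    _ = 12 * ((∫⁻ h, (Set.Icc (0 : ℝ) (2 * (T / (N + 1)))).indicator (fun _ => (1 : ℝ≥0∞)) (-h)
          * Phi T f h)
          + ∫⁻ h, (Set.Icc (0 : ℝ) (2 * (T / (N + 1)))).indicator (fun _ => (1 : ℝ≥0∞)) h
          * Phi T f h) := by
        congr 1
        rw [← lintegral_add_left hnegF]
        exact lintegral_congr fun h => by ring
    _ = 24 * ∫⁻ h in Set.Ioo 0 (2 * (T / (N + 1))), Phi T f h := by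
        rw [h8, step9, ← two_mul, ← mul_assoc]
        norm_num

end Main

end TempOscAux

open TempOscAux

/-- Temporal tempOsc bound, Nikolskii case: for `α ∈ (0,1)` there is a constant `C`
depending only on `α` such that, whenever
`M := sup_{h ∈ (0,T)} h^{−α} ‖τ_h f‖_{L²}` is finite,
`(1/τ) Σ_{n=1}^N ∫∫ a_n(s) a_n(t) ‖f(s) − f(t)‖² dt ds ≤ C τ^{2α} M²`. -/
theorem temporal_oscillation_nikolskii (α : ℝ) (hα : α ∈ Set.Ioo (0 : ℝ) 1) :
    ∃ C : ℝ, 0 < C ∧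
      ∀ (H : Type) [NormedAddCommGroup H] [InnerProductSpace ℝ H] [CompleteSpace H],
        ∀ (T : ℝ), 0 < T → ∀ (N : ℕ), 1 ≤ N → ∀ f : ℝ → H, StronglyMeasurable f →
          (⨆ h ∈ Set.Ioo (0 : ℝ) T,
              ENNReal.ofReal h ^ (-α) * sqIncrementNorm T f h ^ ((1 : ℝ) / 2)) ≠ ⊤ →
          tempOsc T N f
            ≤ ENNReal.ofReal C * ENNReal.ofReal (T / (N + 1)) ^ (2 * α)
              * (⨆ h ∈ Set.Ioo (0 : ℝ) T,
                  ENNReal.ofReal h ^ (-α) * sqIncrementNorm T f h ^ ((1 : ℝ) / 2)) ^ 2 := by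
  obtain ⟨hα0, hα1⟩ := hα
  refine ⟨192, by norm_num, ?_⟩
  intro H _ _ _ T hT N hN f hf hMfin
  set M := ⨆ h ∈ Set.Ioo (0 : ℝ) T,
      ENNReal.ofReal h ^ (-α) * sqIncrementNorm T f h ^ ((1 : ℝ) / 2) with hMdef
  have hτ : 0 < T / ((N : ℝ) + 1) := by positivity
  have hN1 : (1 : ℝ) ≤ (N : ℝ) := by exact_mod_cast hN
  have hTeq : ((N : ℝ) + 1) * (T / ((N : ℝ) + 1)) = T := by field_simp
  have h2τT : 2 * (T / ((N : ℝ) + 1)) ≤ T := by nlinarith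
  have hNik : ∀ h : ℝ, h ∈ Set.Ioo (0 : ℝ) T →
      sqIncrementNorm T f h ≤ ENNReal.ofReal h ^ (2 * α) * M ^ 2 := by
    intro h hh
    have hle : ENNReal.ofReal h ^ (-α) * sqIncrementNorm T f h ^ ((1 : ℝ) / 2) ≤ M := by
      rw [hMdef]
      exact le_biSup
        (fun x : ℝ => ENNReal.ofReal x ^ (-α) * sqIncrementNorm T f x ^ ((1 : ℝ) / 2)) hh
    have hx0 : ENNReal.ofReal h ≠ 0 := (ENNReal.ofReal_pos.2 hh.1).ne'
    have hxt : ENNReal.ofReal h ≠ ⊤ := ENNReal.ofReal_ne_top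
    have hhalf : sqIncrementNorm T f h ^ ((1 : ℝ) / 2) ≤ ENNReal.ofReal h ^ α * M := by
      have heq : sqIncrementNorm T f h ^ ((1 : ℝ) / 2)
          = ENNReal.ofReal h ^ α * (ENNReal.ofReal h ^ (-α)
            * sqIncrementNorm T f h ^ ((1 : ℝ) / 2)) := by
        rw [← mul_assoc, ← ENNReal.rpow_add _ _ hx0 hxt]
        simp
      rw [heq]
      exact mul_le_mul_right hle _
    calc sqIncrementNorm T f h
        = (sqIncrementNorm T f h ^ ((1 : ℝ) / 2)) ^ (2 : ℕ) := by
          rw [← ENNReal.rpow_natCast (sqIncrementNorm T f h ^ ((1 : ℝ) / 2)) 2,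
            ← ENNReal.rpow_mul]
          norm_num
      _ ≤ (ENNReal.ofReal h ^ α * M) ^ (2 : ℕ) := pow_le_pow_left' hhalf 2
      _ = ENNReal.ofReal h ^ (2 * α) * M ^ 2 := by
          rw [mul_pow, ← ENNReal.rpow_natCast (ENNReal.ofReal h ^ α) 2, ← ENNReal.rpow_mul]
          congr 2
          push_cast
          ring
  have hΦbound : ∀ h ∈ Set.Ioo (0 : ℝ) (2 * (T / ((N : ℝ) + 1))),
      Phi T f h ≤ ENNReal.ofReal (2 * (T / ((N : ℝ) + 1))) ^ (2 * α) * M ^ 2 := by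
    intro h hh
    have hhT : h ∈ Set.Ioo (0 : ℝ) T := ⟨hh.1, lt_of_lt_of_le hh.2 h2τT⟩
    calc Phi T f h ≤ sqIncrementNorm T f h := Phi_le_sqIncrement h
      _ ≤ ENNReal.ofReal h ^ (2 * α) * M ^ 2 := hNik h hhT
      _ ≤ ENNReal.ofReal (2 * (T / ((N : ℝ) + 1))) ^ (2 * α) * M ^ 2 :=
          mul_le_mul_left
            (ENNReal.rpow_le_rpow (ENNReal.ofReal_le_ofReal hh.2.le) (by linarith)) _
  have hIoo : (∫⁻ h in Set.Ioo 0 (2 * (T / ((N : ℝ) + 1))), Phi T f h)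
      ≤ ENNReal.ofReal (2 * (T / ((N : ℝ) + 1))) ^ (2 * α) * M ^ 2
        * ENNReal.ofReal (2 * (T / ((N : ℝ) + 1))) := by
    calc (∫⁻ h in Set.Ioo 0 (2 * (T / ((N : ℝ) + 1))), Phi T f h)
        ≤ ∫⁻ _ in Set.Ioo (0 : ℝ) (2 * (T / ((N : ℝ) + 1))),
            ENNReal.ofReal (2 * (T / ((N : ℝ) + 1))) ^ (2 * α) * M ^ 2 :=
          setLIntegral_mono_ae measurable_const.aemeasurable (ae_of_all _ hΦbound)
      _ = ENNReal.ofReal (2 * (T / ((N : ℝ) + 1))) ^ (2 * α) * M ^ 2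
            * volume (Set.Ioo (0 : ℝ) (2 * (T / ((N : ℝ) + 1)))) := setLIntegral_const _ _
      _ = _ := by rw [Real.volume_Ioo]; norm_num
  have hsum := sum_bound hτ hf
  have hx0 : ENNReal.ofReal (T / ((N : ℝ) + 1)) ≠ 0 := (ENNReal.ofReal_pos.2 hτ).ne'
  have hxt : ENNReal.ofReal (T / ((N : ℝ) + 1)) ≠ ⊤ := ENNReal.ofReal_ne_top
  have h2x : ENNReal.ofReal (2 * (T / ((N : ℝ) + 1)))
      = 2 * ENNReal.ofReal (T / ((N : ℝ) + 1)) := by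
    rw [ENNReal.ofReal_mul (by norm_num : (0 : ℝ) ≤ 2)]
    norm_num
  have h4 : (2 : ℝ≥0∞) ^ (2 * α) ≤ 4 := by
    calc (2 : ℝ≥0∞) ^ (2 * α) ≤ 2 ^ (2 : ℝ) :=
        ENNReal.rpow_le_rpow_of_exponent_le (by norm_num) (by linarith)
      _ = 4 := by
        rw [show (2 : ℝ) = ((2 : ℕ) : ℝ) by norm_num, ENNReal.rpow_natCast]
        norm_num
  rw [tempOsc]
  calc (ENNReal.ofReal (T / (N + 1)))⁻¹ * ∑ n ∈ Finset.Icc 1 N,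
        ∫⁻ s, ∫⁻ t, ENNReal.ofReal (aWeight T N n s) * ENNReal.ofReal (aWeight T N n t)
          * ENNReal.ofReal (‖f s - f t‖ ^ 2)
      ≤ (ENNReal.ofReal (T / ((N : ℝ) + 1)))⁻¹
          * (24 * (ENNReal.ofReal (2 * (T / ((N : ℝ) + 1))) ^ (2 * α) * M ^ 2
            * ENNReal.ofReal (2 * (T / ((N : ℝ) + 1))))) :=
        mul_le_mul_right (le_trans hsum (mul_le_mul_right hIoo _)) _
    _ = 48 * ((2 : ℝ≥0∞) ^ (2 * α) * (ENNReal.ofReal (T / ((N : ℝ) + 1)) ^ (2 * α) * M ^ 2)) := by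
        rw [h2x, ENNReal.mul_rpow_of_nonneg _ _ (by linarith : (0 : ℝ) ≤ 2 * α)]
        calc (ENNReal.ofReal (T / ((N : ℝ) + 1)))⁻¹
              * (24 * ((2 : ℝ≥0∞) ^ (2 * α) * ENNReal.ofReal (T / ((N : ℝ) + 1)) ^ (2 * α) * M ^ 2
                * (2 * ENNReal.ofReal (T / ((N : ℝ) + 1)))))
            = (48 * ((2 : ℝ≥0∞) ^ (2 * α) * (ENNReal.ofReal (T / ((N : ℝ) + 1)) ^ (2 * α) * M ^ 2)))
              * ((ENNReal.ofReal (T / ((N : ℝ) + 1)))⁻¹ * ENNReal.ofReal (T / ((N : ℝ) + 1))) := by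
              ring
          _ = _ := by rw [ENNReal.inv_mul_cancel hx0 hxt, mul_one]
    _ ≤ 48 * (4 * (ENNReal.ofReal (T / ((N : ℝ) + 1)) ^ (2 * α) * M ^ 2)) := by
        exact mul_le_mul_right (mul_le_mul_left h4 _) _
    _ = ENNReal.ofReal 192 * ENNReal.ofReal (T / ((N : ℝ) + 1)) ^ (2 * α) * M ^ 2 := by
        rw [show (ENNReal.ofReal (192 : ℝ)) = 192 by norm_num]
        ring
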